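/- There is a family of rational constants C(m,p,q,b,j), depending only on the integers m, p, q, b, j, with the following property: for every datum (H, I^{•,•}, N, Y, N⁺) as in the context, every h ∈ H, and every primitive decomposition (h^{p,q}(b)) of h, one has for all p, q ∈ ℤ and all integers 0 ≤ b ≤ m−p−q: h^{p,q}(b) = Σ_{j≥0} C(m,p,q,b,j) · (N⁺)^j N^{b+j} (h^{p+b,q+b}), where h^{p+b,q+b} denotes the I^{p+b,q+b}-component of h and the sum is finite because N^{b+j}(h^{p+b,q+b}) = 0 for all sufficiently large j. -/

import Mathlib

namespace Stmt6Aux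

/-- `Pc a b ℓ` is the scalar with `N^a (N⁺^b v) = Pc a b ℓ • N⁺^{b-a} v` for primitive `v`. -/
def Pc : ℕ → ℕ → ℤ → ℚ
  | 0, _, _ => 1
  | (a+1), b, L => Pc a b L * (((b : ℚ) - a) * ((L : ℚ) - b + a + 1))

lemma Pc_pos : ∀ (a b : ℕ) (L : ℤ), a ≤ b → (b : ℤ) ≤ L → 0 < Pc a b L
  | 0, b, L, _, _ => one_pos
  | (a+1), b, L, hab, hbL => by
    have h1 : 0 < Pc a b L := Pc_pos a b L (Nat.le_of_succ_le hab) hbL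
    have h2 : (a : ℚ) + 1 ≤ b := by exact_mod_cast hab
    have h3 : (b : ℚ) ≤ (L : ℚ) := by exact_mod_cast hbL
    show 0 < Pc a b L * (((b : ℚ) - a) * ((L : ℚ) - b + a + 1))
    have : (0:ℚ) < ((b : ℚ) - a) * ((L : ℚ) - b + a + 1) := by nlinarith
    positivity

def Acoef (L : ℤ) (b j k : ℕ) : ℚ := Pc (b + j) (b + k) (L + 2 * k)

lemma Acoef_diag_ne (L : ℤ) (b k : ℕ) (hb : (b : ℤ) ≤ L) : Acoef L b k k ≠ 0 := by
  refine ne_of_gt (Pc_pos _ _ _ le_rfl ?_)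
  push_cast; linarith

def Cp (L : ℤ) (b : ℕ) : ℕ → ℕ → ℚ
  | 0 => fun _ => 0
  | (n+1) => fun j =>
      if j = n then
        ((if n = 0 then 1 else 0) - ∑ i ∈ Finset.range n, Cp L b n i * Acoef L b i n)
          / Acoef L b n n
      else Cp L b n j

/-- The universal coefficients. -/
def Cdef (L : ℤ) (b j : ℕ) : ℚ := Cp L b (j+1) j

lemma Cp_stable (L : ℤ) (b : ℕ) : ∀ n j, j < n → Cp L b n j = Cdef L b j := by
  intro n
  induction n with
  | zero => intro j hj; omega
  | succ n ih =>
    intro j hj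
    by_cases hjn : j = n
    · subst hjn
      rfl
    · have hj' : j < n := by omega
      show Cp L b (n+1) j = Cdef L b j
      rw [show Cp L b (n+1) j = Cp L b n j from if_neg hjn]
      exact ih j hj'

lemma Cdef_key (L : ℤ) (b : ℕ) (hb : (b : ℤ) ≤ L) (k : ℕ) :
    ∑ j ∈ Finset.range (k+1), Cdef L b j * Acoef L b j k = if k = 0 then 1 else 0 := by
  have hne := Acoef_diag_ne L b k hb
  rw [Finset.sum_range_succ]
  have hC : Cdef L b k =
      ((if k = 0 then 1 else 0) - ∑ i ∈ Finset.range k, Cdef L b i * Acoef L b i k)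
        / Acoef L b k k := by
    show Cp L b (k+1) k = _
    rw [show Cp L b (k+1) k = ((if k = 0 then 1 else 0)
        - ∑ i ∈ Finset.range k, Cp L b k i * Acoef L b i k) / Acoef L b k k from if_pos rfl]
    congr 2
    refine Finset.sum_congr rfl fun i hi => ?_
    rw [Cp_stable L b k i (Finset.mem_range.mp hi)]
  rw [hC, div_mul_cancel₀ _ hne]
  ring

end Stmt6Aux

namespace Stmt6Aux2

section sl2
variable {H : Type} [AddCommGroup H] [Module ℂ H]
variable {m : ℤ} {I : ℤ × ℤ → Submodule ℂ H} {Y N Np : Module.End ℂ H}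

lemma pow_mem_Np (hNp : ∀ p q : ℤ, ∀ v ∈ I (p, q), Np v ∈ I (p+1, q+1)) :
    ∀ (k : ℕ) (p q : ℤ) (v : H), v ∈ I (p, q) → (Np ^ k) v ∈ I (p + k, q + k) := by
  intro k
  induction k with
  | zero => intro p q v hv; simpa using hv
  | succ k ih =>
    intro p q v hv
    have h1 : (Np ^ (k+1)) v = Np ((Np ^ k) v) := by
      rw [pow_succ']; rfl
    rw [h1]
    have := hNp (p + k) (q + k) _ (ih p q v hv)
    convert this using 2 <;> push_cast <;> ring

lemma N_Np_succ
    (hY : ∀ p q : ℤ, ∀ v ∈ I (p, q), Y v = ((p + q - m : ℤ) : ℂ) • v)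
    (hNp : ∀ p q : ℤ, ∀ v ∈ I (p, q), Np v ∈ I (p+1, q+1))
    (hcomm : N * Np - Np * N = -Y) :
    ∀ (k : ℕ) (p q : ℤ) (v : H), v ∈ I (p, q) → N v = 0 →
      N ((Np ^ (k+1)) v)
        = ((((k : ℚ) + 1) * ((m : ℚ) - p - q - k) : ℚ) : ℂ) • (Np ^ k) v := by
  have hNNp : ∀ w : H, N (Np w) = Np (N w) - Y w := by
    intro w
    have h := congrArg (fun f : Module.End ℂ H => f w) hcomm
    simp only [LinearMap.sub_apply, Module.End.mul_apply, LinearMap.neg_apply] at h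
    have h2 := sub_eq_iff_eq_add.mp h
    rw [h2]; abel
  intro k
  induction k with
  | zero =>
    intro p q v hv hNv
    have : N (Np v) = Np (N v) - Y v := hNNp v
    rw [pow_one, pow_zero, this, hNv, map_zero, hY p q v hv]
    simp only [Module.End.one_apply]
    push_cast
    module
  | succ k ih =>
    intro p q v hv hNv
    have hmem : (Np ^ (k+1)) v ∈ I (p + (k+1 : ℕ), q + (k+1 : ℕ)) := pow_mem_Np hNp (k+1) p q v hv
    have h1 : (Np ^ (k+2)) v = Np ((Np ^ (k+1)) v) := by rw [pow_succ']; rfl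
    rw [h1, hNNp, ih p q v hv hNv, map_smul, hY _ _ _ hmem]
    have h2 : Np ((Np ^ k) v) = (Np ^ (k+1)) v := by rw [pow_succ']; rfl
    rw [h2]
    push_cast
    module

lemma Npow_Nppow
    (hY : ∀ p q : ℤ, ∀ v ∈ I (p, q), Y v = ((p + q - m : ℤ) : ℂ) • v)
    (hNp : ∀ p q : ℤ, ∀ v ∈ I (p, q), Np v ∈ I (p+1, q+1))
    (hcomm : N * Np - Np * N = -Y) :
    ∀ (a b : ℕ), a ≤ b → ∀ (p q : ℤ) (v : H), v ∈ I (p, q) → N v = 0 →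
      (N ^ a) ((Np ^ b) v) = ((Stmt6Aux.Pc a b (m - p - q) : ℚ) : ℂ) • (Np ^ (b - a)) v := by
  intro a
  induction a with
  | zero =>
    intro b _ p q v hv hNv
    simp [Stmt6Aux.Pc]
  | succ a ih =>
    intro b hab p q v hv hNv
    have hab' : a ≤ b := Nat.le_of_succ_le hab
    have h1 : (N ^ (a+1)) ((Np ^ b) v) = N ((N ^ a) ((Np ^ b) v)) := by rw [pow_succ']; rfl
    rw [h1, ih b hab' p q v hv hNv, map_smul]
    have ht : b - a = (b - (a+1)) + 1 := by omega
    rw [ht, N_Np_succ hY hNp hcomm (b - (a+1)) p q v hv hNv]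
    rw [smul_smul]
    congr 1
    have h2 : ((b - (a+1) : ℕ) : ℚ) = (b : ℚ) - a - 1 := by
      have : ((b - (a+1) : ℕ) : ℤ) = (b : ℤ) - a - 1 := by omega
      exact_mod_cast this
    show ((Stmt6Aux.Pc a b (m - p - q) : ℚ) : ℂ) * _
        = ((Stmt6Aux.Pc a b (m - p - q) * (((b : ℚ) - a) * (((m - p - q : ℤ) : ℚ) - b + a + 1)) : ℚ) : ℂ)
    push_cast [h2]
    ring

lemma Npow_Nppow_zero
    (hY : ∀ p q : ℤ, ∀ v ∈ I (p, q), Y v = ((p + q - m : ℤ) : ℂ) • v)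
    (hNp : ∀ p q : ℤ, ∀ v ∈ I (p, q), Np v ∈ I (p+1, q+1))
    (hcomm : N * Np - Np * N = -Y) :
    ∀ (a b : ℕ), b < a → ∀ (p q : ℤ) (v : H), v ∈ I (p, q) → N v = 0 →
      (N ^ a) ((Np ^ b) v) = 0 := by
  intro a b hba p q v hv hNv
  have hb1 : (N ^ (b+1)) ((Np ^ b) v) = 0 := by
    have h1 : (N ^ (b+1)) ((Np ^ b) v) = N ((N ^ b) ((Np ^ b) v)) := by rw [pow_succ']; rfl
    rw [h1, Npow_Nppow hY hNp hcomm b b le_rfl p q v hv hNv, map_smul]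
    simp [hNv]
  have ha : a = (a - (b+1)) + (b+1) := by omega
  rw [ha, pow_add, Module.End.mul_apply, hb1, map_zero]

end sl2

lemma internal_eq_zero {ι : Type} [DecidableEq ι] {H : Type} [AddCommGroup H] [Module ℂ H]
    {I : ι → Submodule ℂ H} (hI : DirectSum.IsInternal I) (u : ι → H)
    (hmem : ∀ i, u i ∈ I i) (hfin : (Function.support u).Finite)
    (hsum : ∑ᶠ i, u i = 0) : ∀ i, u i = 0 := by
  classical
  set s := hfin.toFinset with hs
  set x : DirectSum ι (fun i => I i) :=
    ∑ i ∈ s, DirectSum.of (fun i => I i) i ⟨u i, hmem i⟩ with hx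
  have hcoe : DirectSum.coeAddMonoidHom I x = 0 := by
    rw [hx, map_sum]
    simp only [DirectSum.coeAddMonoidHom_of]
    rw [← finsum_eq_sum_of_support_subset u (by rw [hs]; exact fun z hz => hfin.mem_toFinset.mpr hz)]
    exact hsum
  have hx0 : x = 0 := by
    apply hI.injective
    rw [hcoe, map_zero]
  intro i
  by_cases hi : i ∈ s
  · have h1 : x i = 0 := by rw [hx0]; rfl
    have h2 : x i = ⟨u i, hmem i⟩ := by
      rw [hx, DFinsupp.finset_sum_apply]
      refine (Finset.sum_eq_single_of_mem i hi ?_).trans (DirectSum.of_eq_same i _)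
      intro j _ hji
      exact DirectSum.of_eq_of_ne _ _ _ hji.symm
    have := h2.symm.trans h1
    exact congrArg Subtype.val this
  · by_contra hne
    exact hi (hfin.mem_toFinset.mpr hne)

end Stmt6Aux2
theorem stmt6 :
    ∃ C : ℤ → ℤ → ℤ → ℕ → ℕ → ℚ,
      ∀ (H : Type) [AddCommGroup H] [Module ℂ H] [FiniteDimensional ℂ H],
      ∀ (m : ℤ) (I : ℤ × ℤ → Submodule ℂ H),
        DirectSum.IsInternal I →
        ∀ Y N Nplus : Module.End ℂ H,
        (∀ p q : ℤ, ∀ v ∈ I (p, q), Y v = ((p + q - m : ℤ) : ℂ) • v) →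
        (∀ p q : ℤ, ∀ v ∈ I (p, q), N v ∈ I (p - 1, q - 1)) →
        (∀ p q : ℤ, ∀ v ∈ I (p, q), Nplus v ∈ I (p + 1, q + 1)) →
        N * Nplus - Nplus * N = -Y →
        ∀ (h : H)
          -- `c p q` is the component of `h` in `I^{p,q}`
          (c : ℤ → ℤ → H),
          (∀ p q : ℤ, c p q ∈ I (p, q)) →
          (Function.support fun pq : ℤ × ℤ => c pq.1 pq.2).Finite →
          h = ∑ᶠ (p : ℤ) (q : ℤ), c p q →
        ∀ d : ℤ → ℤ → ℕ → H,
          -- `d` is a primitive decomposition of `h`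
          (∀ (p q : ℤ) (b : ℕ), d p q b ∈ I (p, q)) →
          (∀ (p q : ℤ) (b : ℕ), N (d p q b) = 0) →
          (∀ (p q : ℤ) (b : ℕ), m - p - q < (b : ℤ) → d p q b = 0) →
          (Function.support fun x : ℤ × ℤ × ℕ => d x.1 x.2.1 x.2.2).Finite →
          h = ∑ᶠ (p : ℤ) (q : ℤ) (b : ℕ), (Nplus ^ b) (d p q b) →
        ∀ (p q : ℤ) (b : ℕ), (b : ℤ) ≤ m - p - q →
          d p q b = ∑ᶠ j : ℕ,
            ((C m p q b j : ℂ)) • (Nplus ^ j) ((N ^ (b + j)) (c (p + b) (q + b))) := by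
  classical
  refine ⟨fun m p q b j => Stmt6Aux.Cdef (m - p - q) b j, ?_⟩
  intro H _ _ _ m I hI Y N Np hY _hN hNp hcomm h c hc hcfin hcsum d hd hdprim _hdvan hdfin hdsum
  -- Stage B : identify the components of h
  set g : ℤ × ℤ × ℕ → H := fun x => (Np ^ x.2.2) (d x.1 x.2.1 x.2.2) with hg
  have hgfin : (Function.support g).Finite := by
    refine hdfin.subset ?_
    intro x hx
    simp only [Function.mem_support] at hx ⊢
    intro h0
    exact hx (by rw [hg]; simp only [h0, map_zero])
  let e : (ℤ × ℤ × ℕ) ≃ (ℤ × ℤ × ℕ) :=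
    ⟨fun x => (x.1 + x.2.2, x.2.1 + x.2.2, x.2.2),
     fun x => (x.1 - x.2.2, x.2.1 - x.2.2, x.2.2),
     fun x => by simp, fun x => by simp⟩
  have hgefin : (Function.support fun x => g (e.symm x)).Finite := by
    have : (Function.support fun x => g (e.symm x)) = e.symm ⁻¹' Function.support g := by
      ext x; simp [Function.mem_support]
    rw [this]
    exact hgfin.preimage (e.symm.injective.injOn)
  have hc2 : ∀ P Q : ℤ, c P Q = ∑ᶠ bb : ℕ, g (P - bb, Q - bb, bb) := by
    set c2 : ℤ → ℤ → H := fun P Q => ∑ᶠ bb : ℕ, g (P - bb, Q - bb, bb) with hc2def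
    -- finite supports for slices of c2
    have hslicefin : ∀ P Q : ℤ, (Function.support fun bb : ℕ => g (P - bb, Q - bb, bb)).Finite := by
      intro P Q
      refine (hgefin.image (fun x => x.2.2)).subset ?_
      intro bb hbb
      simp only [Function.mem_support] at hbb
      exact ⟨(P, Q, bb), hbb, rfl⟩
    have hc2fin : (Function.support fun PQ : ℤ × ℤ => c2 PQ.1 PQ.2).Finite := by
      refine (hgefin.image (fun x => (x.1, x.2.1))).subset ?_
      rintro ⟨P, Q⟩ hPQ
      simp only [Function.mem_support, hc2def] at hPQ
      have : ∃ bb : ℕ, g (P - bb, Q - bb, bb) ≠ 0 := by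
        by_contra hall
        push_neg at hall
        exact hPQ (finsum_eq_zero_of_forall_eq_zero hall)
      obtain ⟨bb, hbb⟩ := this
      exact ⟨(P, Q, bb), hbb, rfl⟩
    have hc2mem : ∀ P Q : ℤ, c2 P Q ∈ I (P, Q) := by
      intro P Q
      show (∑ᶠ bb : ℕ, g (P - bb, Q - bb, bb)) ∈ I (P, Q)
      rw [finsum_eq_sum_of_support_subset _
        (by exact fun bb hbb => (hslicefin P Q).mem_toFinset.mpr hbb :
          (Function.support fun bb : ℕ => g (P - bb, Q - bb, bb)) ⊆ ↑(hslicefin P Q).toFinset)]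
      refine Submodule.sum_mem _ ?_
      intro bb _
      have hmem : (Np ^ bb) (d (P - bb) (Q - bb) bb) ∈ I ((P - bb) + bb, (Q - bb) + bb) :=
        Stmt6Aux2.pow_mem_Np hNp bb _ _ _ (hd (P - bb) (Q - bb) bb)
      simpa using hmem
    -- h is also the double finsum of c2
    have hsum2 : h = ∑ᶠ (P : ℤ) (Q : ℤ), c2 P Q := by
      rw [hdsum]
      have e1 : (∑ᶠ (P : ℤ) (Q : ℤ) (bb : ℕ), (Np ^ bb) (d P Q bb)) = ∑ᶠ x, g x :=
        (finsum_curry₃ g hgfin).symm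
      rw [e1, ← finsum_comp_equiv e.symm,
        finsum_curry₃ (fun x => g (e.symm x)) hgefin]
      rfl
    -- uniqueness of components
    have huniq := Stmt6Aux2.internal_eq_zero hI
      (fun PQ : ℤ × ℤ => c PQ.1 PQ.2 - c2 PQ.1 PQ.2)
      (fun PQ => sub_mem (hc PQ.1 PQ.2) (hc2mem PQ.1 PQ.2))
      (by
        refine (hcfin.union hc2fin).subset ?_
        intro PQ hPQ
        simp only [Function.mem_support] at hPQ
        by_contra hn
        simp only [Set.mem_union, Function.mem_support, not_or, not_not] at hn
        exact hPQ (by rw [hn.1, hn.2, sub_self]))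
      (by
        rw [finsum_sub_distrib hcfin hc2fin]
        rw [finsum_curry _ hcfin, finsum_curry _ hc2fin]
        rw [← hcsum, ← hsum2, sub_self])
    intro P Q
    have := huniq (P, Q)
    simpa [sub_eq_zero] using this
  -- Stage C : inversion
  intro p q b hbL
  set L := m - p - q with hLdef
  set T : Finset ℕ := hdfin.toFinset.image (fun x => x.2.2) with hT
  have hTd : ∀ (P Q : ℤ) (a : ℕ), d P Q a ≠ 0 → a ∈ T := by
    intro P Q a hne
    exact Finset.mem_image.mpr ⟨(P, Q, a), hdfin.mem_toFinset.mpr hne, rfl⟩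
  set da : ℕ → H := fun a => d (p + b - a) (q + b - a) a with hda
  have hcsum' : c (p + b) (q + b) = ∑ a ∈ T, (Np ^ a) (da a) := by
    rw [hc2 (p + b) (q + b)]
    refine finsum_eq_sum_of_support_subset _ ?_
    intro a ha
    simp only [Function.mem_support, hg] at ha
    refine Finset.mem_coe.mpr (hTd (p + ↑b - ↑a) (q + ↑b - ↑a) a ?_)
    intro h0
    exact ha (by rw [h0, map_zero])
  -- the main term computation
  have hterm : ∀ j a : ℕ,
      (Np ^ j) ((N ^ (b + j)) ((Np ^ a) (da a)))
        = if b + j ≤ a then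
            ((Stmt6Aux.Pc (b + j) a (m - (p + ↑b - ↑a) - (q + ↑b - ↑a)) : ℚ) : ℂ)
              • (Np ^ (a - b)) (da a)
          else 0 := by
    intro j a
    have hmem : da a ∈ I (p + ↑b - ↑a, q + ↑b - ↑a) := hd _ _ _
    have hprim : N (da a) = 0 := hdprim _ _ _
    by_cases hcase : b + j ≤ a
    · rw [if_pos hcase]
      rw [Stmt6Aux2.Npow_Nppow hY hNp hcomm (b + j) a hcase _ _ _ hmem hprim]
      rw [map_smul]
      congr 1
      rw [← Module.End.mul_apply, ← pow_add, show j + (a - (b + j)) = a - b from by omega]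
    · rw [if_neg hcase]
      rw [Stmt6Aux2.Npow_Nppow_zero hY hNp hcomm (b + j) a (by omega) _ _ _ hmem hprim,
        map_zero]
  set v : ℕ → H := fun j => (Np ^ j) ((N ^ (b + j)) (c (p + ↑b) (q + ↑b))) with hv
  have hvformula : ∀ j : ℕ, v j = ∑ a ∈ T,
      (if b + j ≤ a then
        ((Stmt6Aux.Pc (b + j) a (m - (p + ↑b - ↑a) - (q + ↑b - ↑a)) : ℚ) : ℂ)
          • (Np ^ (a - b)) (da a)
      else 0) := by
    intro j
    show (Np ^ j) ((N ^ (b + j)) (c (p + ↑b) (q + ↑b))) = _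
    rw [hcsum', map_sum, map_sum]
    exact Finset.sum_congr rfl fun a _ => hterm j a
  set J : ℕ := T.sup id + 1 with hJ
  have hvzero : ∀ j : ℕ, J ≤ j → v j = 0 := by
    intro j hj
    rw [hvformula]
    refine Finset.sum_eq_zero fun a ha => ?_
    rw [if_neg]
    have := Finset.le_sup (f := id) ha
    simp only [id] at this
    omega
  have hRHS : (∑ᶠ j : ℕ, ((Stmt6Aux.Cdef L b j : ℚ) : ℂ) • v j)
      = ∑ j ∈ Finset.range J, ((Stmt6Aux.Cdef L b j : ℚ) : ℂ) • v j := by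
    refine finsum_eq_sum_of_support_subset _ ?_
    intro j hj
    simp only [Function.mem_support] at hj
    simp only [Finset.coe_range, Set.mem_Iio]
    by_contra hjJ
    exact hj (by rw [hvzero j (by omega), smul_zero])
  -- finish
  show d p q b = ∑ᶠ j : ℕ, ((Stmt6Aux.Cdef L b j : ℚ) : ℂ) • v j
  rw [hRHS]
  symm
  calc
    ∑ j ∈ Finset.range J, ((Stmt6Aux.Cdef L b j : ℚ) : ℂ) • v j
        = ∑ j ∈ Finset.range J, ∑ a ∈ T,
            (if b + j ≤ a then
              ((Stmt6Aux.Cdef L b j * Stmt6Aux.Pc (b + j) a (m - (p + ↑b - ↑a) - (q + ↑b - ↑a)) : ℚ) : ℂ)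
                • (Np ^ (a - b)) (da a)
            else 0) := by
      refine Finset.sum_congr rfl fun j _ => ?_
      rw [hvformula j, Finset.smul_sum]
      refine Finset.sum_congr rfl fun a _ => ?_
      by_cases hcase : b + j ≤ a
      · rw [if_pos hcase, if_pos hcase, smul_smul]
        congr 1
        push_cast
        ring
      · rw [if_neg hcase, if_neg hcase, smul_zero]
    _ = ∑ a ∈ T,
          ((∑ j ∈ Finset.range J,
            (if b + j ≤ a then
              (Stmt6Aux.Cdef L b j * Stmt6Aux.Pc (b + j) a (m - (p + ↑b - ↑a) - (q + ↑b - ↑a)) : ℚ)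
            else 0) : ℚ) : ℂ) • (Np ^ (a - b)) (da a) := by
      rw [Finset.sum_comm]
      refine Finset.sum_congr rfl fun a _ => ?_
      have hsplit : ∀ j ∈ Finset.range J,
          (if b + j ≤ a then
            ((Stmt6Aux.Cdef L b j * Stmt6Aux.Pc (b + j) a (m - (p + ↑b - ↑a) - (q + ↑b - ↑a)) : ℚ) : ℂ)
              • (Np ^ (a - b)) (da a)
          else 0)
          = (((if b + j ≤ a then
              (Stmt6Aux.Cdef L b j * Stmt6Aux.Pc (b + j) a (m - (p + ↑b - ↑a) - (q + ↑b - ↑a)) : ℚ)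
            else 0) : ℚ) : ℂ) • (Np ^ (a - b)) (da a) := by
        intro j _
        by_cases hcase : b + j ≤ a
        · rw [if_pos hcase, if_pos hcase]
        · rw [if_neg hcase, if_neg hcase, Rat.cast_zero, zero_smul]
      rw [Finset.sum_congr rfl hsplit, ← Finset.sum_smul, ← Rat.cast_sum]
    _ = ∑ a ∈ T, (if a = b then (1 : ℂ) else 0) • (Np ^ (a - b)) (da a) := by
      refine Finset.sum_congr rfl fun a haT => ?_
      congr 1
      by_cases hab : b ≤ a
      · -- a = b + k
        obtain ⟨k, rfl⟩ := Nat.exists_eq_add_of_le hab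
        have hka : k ≤ T.sup id := by
          have := Finset.le_sup (f := id) haT
          simp only [id] at this
          omega
        have hL2 : m - (p + ↑b - ↑(b + k)) - (q + ↑b - ↑(b + k)) = L + 2 * k := by
          push_cast
          rw [hLdef]
          ring
        have hsum1 : (∑ j ∈ Finset.range J,
            (if b + j ≤ b + k then
              (Stmt6Aux.Cdef L b j * Stmt6Aux.Pc (b + j) (b + k) (m - (p + ↑b - ↑(b + k)) - (q + ↑b - ↑(b + k))) : ℚ)
            else 0)) = ∑ j ∈ Finset.range (k + 1), Stmt6Aux.Cdef L b j * Stmt6Aux.Acoef L b j k := by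
          rw [← Finset.sum_filter]
          refine Finset.sum_congr ?_ ?_
          · ext j
            simp only [Finset.mem_filter, Finset.mem_range]
            omega
          · intro j _
            rw [hL2]
            rfl
        rw [hsum1, Stmt6Aux.Cdef_key L b hbL k]
        have : (b + k = b) ↔ (k = 0) := by omega
        by_cases hk : k = 0
        · subst hk
          norm_num
        · rw [if_neg hk, if_neg (by omega)]
          norm_num
      · -- a < b : every if is false, and a ≠ b
        rw [if_neg (by omega)]
        rw [Finset.sum_eq_zero fun j _ => if_neg (by omega)]
        norm_num
    _ = d p q b := by
      have hstep : ∀ a ∈ T, (if a = b then (1 : ℂ) else 0) • (Np ^ (a - b)) (da a)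
          = if a = b then (Np ^ (a - b)) (da a) else 0 := by
        intro a _
        by_cases hab : a = b
        · rw [if_pos hab, if_pos hab, one_smul]
        · rw [if_neg hab, if_neg hab, zero_smul]
      rw [Finset.sum_congr rfl hstep, Finset.sum_ite_eq' T b (fun a => (Np ^ (a - b)) (da a))]
      by_cases hbT : b ∈ T
      · rw [if_pos hbT]
        rw [Nat.sub_self, pow_zero]
        have : da b = d p q b := by
          rw [hda]
          norm_num
        rw [this]
        rfl
      · rw [if_neg hbT]
        by_contra hne
        have : d p q b ≠ 0 := by
          intro h0
          exact hne (by rw [h0])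
        exact hbT (hTd p q b this)
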